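/- Let X be a Banach space over ℝ whose dual X* satisfies: for every set A ⊆ X* and every f in the weak-star closure of A, there is a countable subset A₀ ⊆ A such that f belongs to the weak-star closure of the linear span of A₀. Then for every uncountable regular cardinal κ and every family {Z_σ}_{σ<κ} of closed linear subspaces of X indexed by the ordinals below κ with Z_β ⊊ Z_α whenever α < β < κ and ⋂_{σ<κ} Z_σ = {0}, the set ⋂_{σ<κ} (B_X + Z_σ) is bounded, where B_X is the closed unit ball of X. -/

import Mathlib

open Set Cardinal Pointwise

section Aux

variable {X : Type*} [NormedAddCommGroup X] [NormedSpace ℝ X]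

/-- For a finite-dimensional subspace `E` and an antitone family of subspaces with trivial
intersection, some `E ⊓ Z σ₀` is trivial. -/
lemma aux_exists_inf_bot {ι : Type*} [LinearOrder ι] [Nonempty ι]
    (Z : ι → Submodule ℝ X) (hmono : ∀ {s t : ι}, s ≤ t → Z t ≤ Z s)
    (hinter : ⋂ σ, (Z σ : Set X) = {0})
    (E : Submodule ℝ X) [FiniteDimensional ℝ E] :
    ∃ σ₀, E ⊓ Z σ₀ = ⊥ := by
  set n : ι → ℕ := fun σ => Module.finrank ℝ ↥(E ⊓ Z σ) with hn
  obtain ⟨σ₀, hσ₀⟩ := Nat.sInf_mem (Set.range_nonempty n)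
  refine ⟨σ₀, ?_⟩
  have key : ∀ σ, E ⊓ Z σ₀ ≤ E ⊓ Z σ := by
    intro σ
    rcases le_total σ σ₀ with h | h
    · exact inf_le_inf_left E (hmono h)
    · have hle : E ⊓ Z σ ≤ E ⊓ Z σ₀ := inf_le_inf_left E (hmono h)
      have heq : E ⊓ Z σ = E ⊓ Z σ₀ :=
        Submodule.eq_of_le_of_finrank_le hle (by
          rw [show Module.finrank ℝ ↥(E ⊓ Z σ₀) = n σ₀ from rfl, hσ₀]
          exact Nat.sInf_le ⟨σ, rfl⟩)
      rw [heq]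
  rw [Submodule.eq_bot_iff]
  intro x hx
  have hxI : x ∈ ⋂ σ, (Z σ : Set X) := Set.mem_iInter.2 fun σ => (key σ hx).2
  rw [hinter] at hxI
  exact hxI

/-- Extension of a functional that vanishes on `Zc` and agrees with `f` on `E`. -/
lemma aux_exists_extension (Zc : Submodule ℝ X) (hZc : IsClosed (Zc : Set X))
    (E : Submodule ℝ X) [FiniteDimensional ℝ E] (hEZ : E ⊓ Zc = ⊥)
    (f : X →L[ℝ] ℝ) :
    ∃ g : X →L[ℝ] ℝ, (∀ z ∈ Zc, g z = 0) ∧ ∀ e ∈ E, g e = f e := by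
  haveI : IsClosed ((Zc : Submodule ℝ X) : Set X) := hZc
  let πL : X →L[ℝ] (X ⧸ Zc) := Zc.mkQ.mkContinuous 1 (fun x => by
    simpa using Submodule.Quotient.norm_mk_le Zc x)
  let ρ : E →ₗ[ℝ] (X ⧸ Zc) := Zc.mkQ.domRestrict E
  have hρ : Function.Injective ρ := by
    rw [← LinearMap.ker_eq_bot, Submodule.eq_bot_iff]
    intro e he
    have h1 : (e : X) ∈ Zc := by
      simpa [ρ, Submodule.Quotient.mk_eq_zero] using he
    have h2 : (e : X) ∈ E ⊓ Zc := ⟨e.2, h1⟩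
    rw [hEZ] at h2
    exact Subtype.ext h2
  let eqv : E ≃ₗ[ℝ] LinearMap.range ρ := LinearEquiv.ofInjective ρ hρ
  haveI : FiniteDimensional ℝ (LinearMap.range ρ) := Module.Finite.equiv eqv
  let h₀ : LinearMap.range ρ →ₗ[ℝ] ℝ :=
    (f.toLinearMap.comp E.subtype).comp eqv.symm.toLinearMap
  obtain ⟨G, hG, -⟩ :=
    exists_extension_norm_eq (LinearMap.range ρ) (LinearMap.toContinuousLinearMap h₀)
  refine ⟨G.comp πL, ?_, ?_⟩
  · intro z hz
    have hz0 : πL z = 0 := by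
      simpa [πL, Submodule.Quotient.mk_eq_zero] using hz
    simp [ContinuousLinearMap.comp_apply, hz0]
  · intro e he
    have h1 : πL e = ((eqv ⟨e, he⟩ : LinearMap.range ρ) : X ⧸ Zc) := rfl
    rw [ContinuousLinearMap.comp_apply, h1, hG]
    simp [h₀, LinearEquiv.symm_apply_apply]

/-- Density of the union of annihilators in the weak-star dual. -/
lemma aux_dense {ι : Type*} [LinearOrder ι] [Nonempty ι]
    (Z : ι → Submodule ℝ X) (hclosed : ∀ σ, IsClosed (Z σ : Set X))
    (hmono : ∀ {s t : ι}, s ≤ t → Z t ≤ Z s)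
    (hinter : ⋂ σ, (Z σ : Set X) = {0})
    (F : WeakDual ℝ X) :
    F ∈ closure (⋃ σ, {g : WeakDual ℝ X | ∀ z ∈ Z σ, g z = 0}) := by
  have hemb : Topology.IsEmbedding (fun (g : WeakDual ℝ X) (y : X) => g y) :=
    WeakBilin.isEmbedding (B := topDualPairing ℝ X)
      (fun _ _ h => ContinuousLinearMap.coe_injective h)
  rw [hemb.closure_eq_preimage_closure_image, Set.mem_preimage, mem_closure_iff_nhds]
  intro U hU
  rw [nhds_pi, Filter.mem_pi] at hU
  obtain ⟨I, hIfin, t, ht, hsub⟩ := hU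
  haveI : FiniteDimensional ℝ (Submodule.span ℝ I) :=
    FiniteDimensional.span_of_finite ℝ hIfin
  obtain ⟨σ₀, hσ₀⟩ := aux_exists_inf_bot Z hmono hinter (Submodule.span ℝ I)
  obtain ⟨g, hg0, hgf⟩ := aux_exists_extension (Z σ₀) (hclosed σ₀) (Submodule.span ℝ I) hσ₀
    (show X →L[ℝ] ℝ from F)
  refine ⟨fun y => g y, ?_, ?_⟩
  · apply hsub
    intro i hi
    have hgi : g i = F i := hgf i (Submodule.subset_span hi)
    show g i ∈ t i
    rw [hgi]
    exact mem_of_mem_nhds (ht i)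
  · exact ⟨(g : WeakDual ℝ X), Set.mem_iUnion.2 ⟨σ₀, hg0⟩, rfl⟩

end Aux

/-- If the dual of `X` has the countable-span tightness property, then `X` belongs to
class (B): for any strictly decreasing long family of closed subspaces with trivial
intersection, `⋂ (B_X + Z_σ)` is bounded. -/
theorem classB_of_countableSpanTight (X : Type*) [NormedAddCommGroup X]
    [NormedSpace ℝ X] [CompleteSpace X]
    (h4 : ∀ A : Set (WeakDual ℝ X), ∀ f ∈ closure A,
      ∃ A₀ ⊆ A, A₀.Countable ∧
        f ∈ closure (Submodule.span ℝ A₀ : Set (WeakDual ℝ X)))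
    (κ : Cardinal) (hκ : Cardinal.aleph0 < κ) (hreg : κ.IsRegular)
    (Z : {σ : Ordinal // σ < κ.ord} → Submodule ℝ X)
    (hclosed : ∀ σ, IsClosed (Z σ : Set X))
    (hnest : ∀ α β, α < β → Z β < Z α)
    (hinter : ⋂ σ, (Z σ : Set X) = {0}) :
    Bornology.IsBounded (⋂ σ, (Metric.closedBall (0 : X) 1 + (Z σ : Set X))) := by
  have hκ0 : (0 : Ordinal) < κ.ord := by
    rw [← Cardinal.ord_zero]
    exact Cardinal.ord_lt_ord.2 (Cardinal.aleph0_pos.trans hκ)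
  haveI : Nonempty {σ : Ordinal // σ < κ.ord} := ⟨⟨0, hκ0⟩⟩
  have hmono : ∀ {s t : {σ : Ordinal // σ < κ.ord}}, s ≤ t → Z t ≤ Z s := by
    intro s t h
    rcases h.lt_or_eq with h' | h'
    · exact (hnest s t h').le
    · rw [h']
  set A : Set (WeakDual ℝ X) := ⋃ σ, {g : WeakDual ℝ X | ∀ z ∈ Z σ, g z = 0} with hA
  have hsubball : (⋂ σ, (Metric.closedBall (0 : X) 1 + (Z σ : Set X)))
      ⊆ Metric.closedBall (0 : X) 1 := by
    intro x hx
    rcases eq_or_ne x 0 with rfl | hx0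
    · simp
    obtain ⟨f, hf1, hfx⟩ := exists_dual_vector ℝ x (norm_ne_zero_iff.2 hx0)
    set F : WeakDual ℝ X := f with hF
    obtain ⟨A₀, hA₀A, hA₀c, hFcl⟩ := h4 A F (aux_dense Z hclosed hmono hinter F)
    have hchoice : ∀ a : A₀, ∃ σ, ∀ z ∈ Z σ, (a : WeakDual ℝ X) z = 0 := fun a =>
      Set.mem_iUnion.1 (hA₀A a.2)
    choose σsel hσsel using hchoice
    haveI : Countable ↥A₀ := hA₀c.to_subtype
    obtain ⟨σstar, hσstar⟩ :
        ∃ σstar : {σ : Ordinal // σ < κ.ord}, ∀ a : A₀, Z σstar ≤ Z (σsel a) := by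
      rcases isEmpty_or_nonempty ↥A₀ with hemp | hne
      · exact ⟨Classical.arbitrary _, fun a => isEmptyElim a⟩
      · set Oord : Set Ordinal := Set.range (fun a : A₀ => ((σsel a : {σ : Ordinal // σ < κ.ord}) : Ordinal)) with hOord
        have hOc : Oord.Countable := Set.countable_range _
        have hOne : Oord.Nonempty := Set.range_nonempty _
        obtain ⟨r, hr⟩ := Set.Countable.exists_eq_range hOc hOne
        have hrlt : ∀ n, r n < κ.ord := by
          intro n
          have : r n ∈ Oord := hr ▸ Set.mem_range_self n
          obtain ⟨a, ha⟩ := this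
          rw [← ha]
          exact (σsel a).2
        have hlt : (⨆ n, r n) < κ.ord := by
          apply Ordinal.iSup_lt_ord_lift
          · rw [Cardinal.mk_nat, Cardinal.lift_aleph0, hreg.cof_eq]
            exact hκ
          · exact hrlt
        refine ⟨⟨⨆ n, r n, hlt⟩, fun a => ?_⟩
        apply hmono
        have hmem : ((σsel a : {σ : Ordinal // σ < κ.ord}) : Ordinal) ∈ Oord := Set.mem_range_self a
        rw [hr] at hmem
        obtain ⟨n, hn⟩ := hmem
        have hbdd : BddAbove (Set.range r) := ⟨κ.ord, by rintro o ⟨m, rfl⟩; exact (hrlt m).le⟩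
        have : ((σsel a : {σ : Ordinal // σ < κ.ord}) : Ordinal) ≤ ⨆ n, r n := by
          rw [← hn]
          exact le_ciSup hbdd n
        exact Subtype.coe_le_coe.1 this
    let Nsub : Submodule ℝ (WeakDual ℝ X) :=
      { carrier := {g : WeakDual ℝ X | ∀ z ∈ Z σstar, g z = 0}
        add_mem' := fun {g h} hg hh z hz => by
          have : (g + h) z = g z + h z := rfl
          rw [this, hg z hz, hh z hz, add_zero]
        zero_mem' := fun z hz => rfl
        smul_mem' := fun c g hg z hz => by
          have : (c • g) z = c * g z := rfl
          rw [this, hg z hz, mul_zero] }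
    have hNclosed : IsClosed (Nsub : Set (WeakDual ℝ X)) := by
      have hNeq : (Nsub : Set (WeakDual ℝ X)) =
          ⋂ z ∈ (Z σstar : Set X), {g : WeakDual ℝ X | g z = 0} := by
        ext g
        simp [Nsub, Set.mem_iInter]
        exact Iff.rfl
      rw [hNeq]
      exact isClosed_biInter fun z _ =>
        isClosed_eq (WeakDual.eval_continuous z) continuous_const
    have hspan : (Submodule.span ℝ A₀ : Set (WeakDual ℝ X)) ⊆ (Nsub : Set (WeakDual ℝ X)) := by
      have : Submodule.span ℝ A₀ ≤ Nsub := by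
        rw [Submodule.span_le]
        intro a ha z hz
        exact hσsel ⟨a, ha⟩ z (hσstar ⟨a, ha⟩ hz)
      exact this
    have hFN : F ∈ (Nsub : Set (WeakDual ℝ X)) :=
      (hNclosed.closure_subset_iff.2 hspan) hFcl
    have hxσ : x ∈ Metric.closedBall (0 : X) 1 + (Z σstar : Set X) := Set.mem_iInter.1 hx σstar
    obtain ⟨b, hb, z, hz, hbz⟩ := Set.mem_add.1 hxσ
    have hfz : f z = 0 := hFN z hz
    have hnorm : ‖x‖ ≤ 1 := by
      calc ‖x‖ = f x := hfx.symm
        _ = f (b + z) := by rw [hbz]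
        _ = f b + f z := map_add f b z
        _ = f b := by rw [hfz, add_zero]
        _ ≤ ‖f b‖ := Real.le_norm_self _
        _ ≤ ‖f‖ * ‖b‖ := f.le_opNorm b
        _ ≤ 1 * 1 := by
            apply mul_le_mul hf1.le (mem_closedBall_zero_iff.1 hb) (norm_nonneg b) zero_le_one
        _ = 1 := one_mul 1
    exact mem_closedBall_zero_iff.2 hnorm
  exact (Metric.isBounded_closedBall).subset hsubball
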